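/- Let A be an n×n matrix, σ a scalar, and suppose A - σI = LU with L unit lower triangular and U upper triangular and invertible. Define A' = UL + σI (one step of shifted LR iteration). Then for every k with 1 ≤ k < n, rank of A'(k+1:n, 1:k) equals rank of A(k+1:n, 1:k) restricted as follows: rank A'(k+1:n,1:k) = rank L(k+1:n,1:k) and rank A'(1:k,k+1:n) = rank U(1:k,k+1:n). In particular, if A has all lower off-diagonal block ranks ≤ r^l and all upper off-diagonal block ranks ≤ r^u, then so does A'. -/

import Mathlib

open Matrix

/-- The strictly lower-left block `A(k+1:n, 1:k)` (1-based), as a matrix. -/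
def lowerBlock {F : Type*} [Field F] {n : ℕ} (A : Matrix (Fin n) (Fin n) F)
    (k : ℕ) (hk : k < n) : Matrix (Fin (n - k)) (Fin k) F :=
  Matrix.of fun i j => A ⟨k + i.1, by have := i.isLt; omega⟩ ⟨j.1, by have := j.isLt; omega⟩

/-- The strictly upper-right block `A(1:k, k+1:n)` (1-based), as a matrix. -/
def upperBlock {F : Type*} [Field F] {n : ℕ} (A : Matrix (Fin n) (Fin n) F)
    (k : ℕ) (hk : k < n) : Matrix (Fin k) (Fin (n - k)) F :=
  Matrix.of fun i j => A ⟨i.1, by have := i.isLt; omega⟩ ⟨k + j.1, by have := j.isLt; omega⟩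

lemma sum_high {F : Type*} [AddCommMonoid F] {n k : ℕ} (hk : k ≤ n) (f : Fin n → F)
    (h0 : ∀ m : Fin n, m.1 < k → f m = 0) :
    ∑ m, f m = ∑ m : Fin (n - k), f ⟨k + m.1, by omega⟩ := by
  rw [← Equiv.sum_comp (finSumFinEquiv.trans (finCongr (show k + (n-k) = n by omega))) f,
    Fintype.sum_sum_type]
  have h1 : ∀ a : Fin k,
      f ((finSumFinEquiv.trans (finCongr (show k + (n-k) = n by omega))) (Sum.inl a)) = 0 := by
    intro a; apply h0; simp [finCongr]
  simp only [h1, Finset.sum_const_zero, zero_add]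
  apply Finset.sum_congr rfl
  intro b _
  congr 1

lemma sum_low {F : Type*} [AddCommMonoid F] {n k : ℕ} (hk : k ≤ n) (f : Fin n → F)
    (h0 : ∀ m : Fin n, k ≤ m.1 → f m = 0) :
    ∑ m, f m = ∑ m : Fin k, f ⟨m.1, by omega⟩ := by
  rw [← Equiv.sum_comp (finSumFinEquiv.trans (finCongr (show k + (n-k) = n by omega))) f,
    Fintype.sum_sum_type]
  have h1 : ∀ a : Fin (n - k),
      f ((finSumFinEquiv.trans (finCongr (show k + (n-k) = n by omega))) (Sum.inr a)) = 0 := by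
    intro a; apply h0; simp [finCongr]
  simp only [h1, Finset.sum_const_zero, add_zero]
  apply Finset.sum_congr rfl
  intro b _
  congr 1

section Blocks
variable {F : Type*} [Field F] {n : ℕ} (k : ℕ) (hk : k < n)

/-- Leading principal `k × k` block. -/
def blk11 (B : Matrix (Fin n) (Fin n) F) : Matrix (Fin k) (Fin k) F :=
  Matrix.of fun i j => B ⟨i.1, by have := i.isLt; omega⟩ ⟨j.1, by have := j.isLt; omega⟩

/-- Trailing principal `(n-k) × (n-k)` block. -/
def blk22 (B : Matrix (Fin n) (Fin n) F) : Matrix (Fin (n - k)) (Fin (n - k)) F :=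
  Matrix.of fun i j => B ⟨k + i.1, by have := i.isLt; omega⟩ ⟨k + j.1, by have := j.isLt; omega⟩

lemma lowerBlock_add_scalar (X : Matrix (Fin n) (Fin n) F) (σ : F) :
    lowerBlock (X + σ • (1 : Matrix (Fin n) (Fin n) F)) k hk = lowerBlock X k hk := by
  ext i j
  simp only [lowerBlock, of_apply, Matrix.add_apply, Matrix.smul_apply, smul_eq_mul]
  rw [one_apply_ne (by intro h; have := congrArg Fin.val h; simp at this; have := j.isLt; omega)]
  ring

lemma upperBlock_add_scalar (X : Matrix (Fin n) (Fin n) F) (σ : F) :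
    upperBlock (X + σ • (1 : Matrix (Fin n) (Fin n) F)) k hk = upperBlock X k hk := by
  ext i j
  simp only [upperBlock, of_apply, Matrix.add_apply, Matrix.smul_apply, smul_eq_mul]
  rw [one_apply_ne (by intro h; have := congrArg Fin.val h; simp at this; have := i.isLt; omega)]
  ring

/-- `P` upper triangular: lower block of `P * M` factors through the trailing block. -/
lemma lowerBlock_mul_left {P : Matrix (Fin n) (Fin n) F}
    (hP : ∀ i j : Fin n, j < i → P i j = 0) (M : Matrix (Fin n) (Fin n) F) :
    lowerBlock (P * M) k hk = blk22 k hk P * lowerBlock M k hk := by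
  ext i j
  simp only [lowerBlock, blk22, mul_apply, of_apply]
  exact sum_high (le_of_lt hk) _ (fun m hm =>
    mul_eq_zero_of_left (hP _ _ (by simp only [Fin.lt_def]; omega)) _)

/-- `P` upper triangular: lower block of `M * P` factors through the leading block. -/
lemma lowerBlock_mul_right {P : Matrix (Fin n) (Fin n) F}
    (hP : ∀ i j : Fin n, j < i → P i j = 0) (M : Matrix (Fin n) (Fin n) F) :
    lowerBlock (M * P) k hk = lowerBlock M k hk * blk11 k hk P := by
  ext i j
  simp only [lowerBlock, blk11, mul_apply, of_apply]
  exact sum_low (le_of_lt hk) _ (fun m hm =>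
    mul_eq_zero_of_right _ (hP _ _ (by simp only [Fin.lt_def]; have := j.isLt; omega)))

/-- `Q` lower triangular: upper block of `M * Q` factors through the trailing block. -/
lemma upperBlock_mul_right {Q : Matrix (Fin n) (Fin n) F}
    (hQ : ∀ i j : Fin n, i < j → Q i j = 0) (M : Matrix (Fin n) (Fin n) F) :
    upperBlock (M * Q) k hk = upperBlock M k hk * blk22 k hk Q := by
  ext i j
  simp only [upperBlock, blk22, mul_apply, of_apply]
  exact sum_high (le_of_lt hk) _ (fun m hm =>
    mul_eq_zero_of_right _ (hQ _ _ (by simp only [Fin.lt_def]; omega)))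

/-- `Q` lower triangular: upper block of `Q * M` factors through the leading block. -/
lemma upperBlock_mul_left {Q : Matrix (Fin n) (Fin n) F}
    (hQ : ∀ i j : Fin n, i < j → Q i j = 0) (M : Matrix (Fin n) (Fin n) F) :
    upperBlock (Q * M) k hk = blk11 k hk Q * upperBlock M k hk := by
  ext i j
  simp only [upperBlock, blk11, mul_apply, of_apply]
  exact sum_low (le_of_lt hk) _ (fun m hm =>
    mul_eq_zero_of_left (hQ _ _ (by simp only [Fin.lt_def]; have := i.isLt; omega)) _)

lemma det_blk11_upper {U : Matrix (Fin n) (Fin n) F}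
    (hUup : ∀ i j : Fin n, j < i → U i j = 0) (hUdiag : ∀ i : Fin n, U i i ≠ 0) :
    IsUnit (blk11 k hk U).det := by
  rw [Matrix.det_of_upperTriangular
    (by intro i j hij; exact hUup _ _ (show j.1 < i.1 from hij))]
  exact (Finset.prod_ne_zero_iff.2 fun i _ => hUdiag _).isUnit

lemma det_blk22_upper {U : Matrix (Fin n) (Fin n) F}
    (hUup : ∀ i j : Fin n, j < i → U i j = 0) (hUdiag : ∀ i : Fin n, U i i ≠ 0) :
    IsUnit (blk22 k hk U).det := by
  rw [Matrix.det_of_upperTriangular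
    (by intro i j hij; exact hUup _ _ (Nat.add_lt_add_left (show j.1 < i.1 from hij) k))]
  exact (Finset.prod_ne_zero_iff.2 fun i _ => hUdiag _).isUnit

lemma det_blk11_lower {L : Matrix (Fin n) (Fin n) F}
    (hLlow : ∀ i j : Fin n, i < j → L i j = 0) (hLdiag : ∀ i : Fin n, L i i = 1) :
    IsUnit (blk11 k hk L).det := by
  rw [Matrix.det_of_lowerTriangular _
    (by intro i j hij; exact hLlow _ _ (show i.1 < j.1 from hij))]
  simp only [blk11, of_apply, hLdiag]
  simp

lemma det_blk22_lower {L : Matrix (Fin n) (Fin n) F}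
    (hLlow : ∀ i j : Fin n, i < j → L i j = 0) (hLdiag : ∀ i : Fin n, L i i = 1) :
    IsUnit (blk22 k hk L).det := by
  rw [Matrix.det_of_lowerTriangular _
    (by intro i j hij; exact hLlow _ _ (Nat.add_lt_add_left (show i.1 < j.1 from hij) k))]
  simp only [blk22, of_apply, hLdiag]
  simp

end Blocks

/-- One step of shifted LR iteration preserves quasiseparable (off-diagonal block rank)
structure. -/
theorem shifted_LR_preserves_quasiseparable {F : Type*} [Field F] {n : ℕ}
    (A L U : Matrix (Fin n) (Fin n) F) (σ : F)
    (hfac : A - σ • (1 : Matrix (Fin n) (Fin n) F) = L * U)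
    (hLlow : ∀ i j : Fin n, i < j → L i j = 0)
    (hLdiag : ∀ i : Fin n, L i i = 1)
    (hUup : ∀ i j : Fin n, j < i → U i j = 0)
    (hUdiag : ∀ i : Fin n, U i i ≠ 0) :
    (∀ (k : ℕ) (hk1 : 1 ≤ k) (hk : k < n),
      (lowerBlock (U * L + σ • (1 : Matrix (Fin n) (Fin n) F)) k hk).rank
          = (lowerBlock L k hk).rank ∧
      (upperBlock (U * L + σ • (1 : Matrix (Fin n) (Fin n) F)) k hk).rank
          = (upperBlock U k hk).rank) ∧
    (∀ rl ru : ℕ,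
      (∀ (k : ℕ) (hk1 : 1 ≤ k) (hk : k < n), (lowerBlock A k hk).rank ≤ rl) →
      (∀ (k : ℕ) (hk1 : 1 ≤ k) (hk : k < n), (upperBlock A k hk).rank ≤ ru) →
      (∀ (k : ℕ) (hk1 : 1 ≤ k) (hk : k < n),
        (lowerBlock (U * L + σ • (1 : Matrix (Fin n) (Fin n) F)) k hk).rank ≤ rl ∧
        (upperBlock (U * L + σ • (1 : Matrix (Fin n) (Fin n) F)) k hk).rank ≤ ru)) := by
  have hA : A = L * U + σ • (1 : Matrix (Fin n) (Fin n) F) := by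
    rw [← hfac]; abel
  have hmain : ∀ (k : ℕ) (hk1 : 1 ≤ k) (hk : k < n),
      (lowerBlock (U * L + σ • (1 : Matrix (Fin n) (Fin n) F)) k hk).rank
          = (lowerBlock L k hk).rank ∧
      (upperBlock (U * L + σ • (1 : Matrix (Fin n) (Fin n) F)) k hk).rank
          = (upperBlock U k hk).rank := by
    intro k hk1 hk
    constructor
    · rw [lowerBlock_add_scalar, lowerBlock_mul_left k hk hUup L,
        rank_mul_eq_right_of_isUnit_det _ _ (det_blk22_upper k hk hUup hUdiag)]
    · rw [upperBlock_add_scalar, upperBlock_mul_right k hk hLlow U,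
        rank_mul_eq_left_of_isUnit_det _ _ (det_blk22_lower k hk hLlow hLdiag)]
  refine ⟨hmain, fun rl ru hrl hru k hk1 hk => ?_⟩
  have hAl : (lowerBlock A k hk).rank = (lowerBlock L k hk).rank := by
    rw [hA, lowerBlock_add_scalar, lowerBlock_mul_right k hk hUup L,
      rank_mul_eq_left_of_isUnit_det _ _ (det_blk11_upper k hk hUup hUdiag)]
  have hAu : (upperBlock A k hk).rank = (upperBlock U k hk).rank := by
    rw [hA, upperBlock_add_scalar, upperBlock_mul_left k hk hLlow U,
      rank_mul_eq_right_of_isUnit_det _ _ (det_blk11_lower k hk hLlow hLdiag)]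
  obtain ⟨h1, h2⟩ := hmain k hk1 hk
  exact ⟨by rw [h1, ← hAl]; exact hrl k hk1 hk, by rw [h2, ← hAu]; exact hru k hk1 hk⟩
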